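/- Given the rounded transport plan X̂ (output of Round applied to B) satisfying ‖X̂ − B‖₁ ≤ 2(‖B1 − r‖₁ + ‖Bᵀ1 − c‖₁), and B satisfying ⟨B,C⟩ ≤ ⟨X*,C⟩ + 2γ ln n + 2(‖B1−r‖₁+‖Bᵀ1−c‖₁)‖C‖∞, with ‖B1−r‖₁+‖Bᵀ1−c‖₁ ≤ ε₀, γ = ε/(4 ln n) and ε₀ = ε/(8‖C‖∞), one has ⟨X̂, C⟩ ≤ ⟨X*, C⟩ + ε. -/

import Mathlib

theorem stmt_19 (n : ℕ) (hn : 2 ≤ n) (C : Fin n → Fin n → ℝ) (hC : ∀ i j, 0 ≤ C i j)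
    (Cmax : ℝ)
    (hCmax : Cmax = Finset.univ.sup' (Finset.univ_nonempty_iff.mpr
        ⟨⟨0, by omega⟩⟩) fun i : Fin n =>
      Finset.univ.sup' (Finset.univ_nonempty_iff.mpr ⟨⟨0, by omega⟩⟩) fun j => |C i j|)
    (hCpos : 0 < Cmax)
    (r c : Fin n → ℝ) (ε γ ε₀ : ℝ) (hε : 0 < ε)
    (hγ : γ = ε / (4 * Real.log n)) (hε₀ : ε₀ = ε / (8 * Cmax))
    (B Xhat Xstar : Fin n → Fin n → ℝ)
    (hround : ∑ i, ∑ j, |Xhat i j - B i j| ≤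
      2 * ((∑ i, |(∑ j, B i j) - r i|) + ∑ j, |(∑ i, B i j) - c j|))
    (hBopt : (∑ i, ∑ j, B i j * C i j) ≤ (∑ i, ∑ j, Xstar i j * C i j) +
      2 * γ * Real.log n +
      2 * ((∑ i, |(∑ j, B i j) - r i|) + ∑ j, |(∑ i, B i j) - c j|) * Cmax)
    (herr : (∑ i, |(∑ j, B i j) - r i|) + (∑ j, |(∑ i, B i j) - c j|) ≤ ε₀) :
    (∑ i, ∑ j, Xhat i j * C i j) ≤ (∑ i, ∑ j, Xstar i j * C i j) + ε := by
  have hlog : 0 < Real.log n := Real.log_pos (by exact_mod_cast by omega)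
  have hCle : ∀ i j, C i j ≤ Cmax := by
    intro i j
    rw [hCmax]
    refine le_trans (le_abs_self _) (le_trans ?_ (Finset.le_sup' _ (Finset.mem_univ i)))
    exact Finset.le_sup' (fun j => |C i j|) (Finset.mem_univ j)
  set E := (∑ i, |(∑ j, B i j) - r i|) + ∑ j, |(∑ i, B i j) - c j| with hE
  have hEnn : 0 ≤ E := add_nonneg (Finset.sum_nonneg fun _ _ => abs_nonneg _)
    (Finset.sum_nonneg fun _ _ => abs_nonneg _)
  have step1 : (∑ i, ∑ j, Xhat i j * C i j) ≤
      (∑ i, ∑ j, B i j * C i j) + (∑ i, ∑ j, |Xhat i j - B i j|) * Cmax := by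
    rw [Finset.sum_mul]
    rw [← Finset.sum_add_distrib]
    refine Finset.sum_le_sum fun i _ => ?_
    rw [Finset.sum_mul, ← Finset.sum_add_distrib]
    refine Finset.sum_le_sum fun j _ => ?_
    have h1 : (Xhat i j - B i j) * C i j ≤ |Xhat i j - B i j| * Cmax :=
      mul_le_mul (le_abs_self _) (hCle i j) (hC i j) (abs_nonneg _)
    nlinarith
  have h2 : (∑ i, ∑ j, |Xhat i j - B i j|) * Cmax ≤ 2 * E * Cmax := by
    apply mul_le_mul_of_nonneg_right _ hCpos.le
    exact hround
  have hgl : 2 * γ * Real.log n = ε / 2 := by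
    rw [hγ]; field_simp; ring
  have hEC : E * Cmax ≤ ε / 8 := by
    have := mul_le_mul_of_nonneg_right herr hCpos.le
    rw [hε₀] at this
    have : ε / (8 * Cmax) * Cmax = ε / 8 := by field_simp
    nlinarith [mul_le_mul_of_nonneg_right herr hCpos.le]
  calc (∑ i, ∑ j, Xhat i j * C i j)
      ≤ (∑ i, ∑ j, B i j * C i j) + 2 * E * Cmax := le_trans step1 (by linarith)
    _ ≤ (∑ i, ∑ j, Xstar i j * C i j) + 2 * γ * Real.log n + 2 * E * Cmax + 2 * E * Cmax := by
        linarith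
    _ ≤ (∑ i, ∑ j, Xstar i j * C i j) + ε := by
        rw [hgl]; linarith
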